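/- For the map C₋, a fixed point (y₀,y₀) has differential with trace -2 (double eigenvalue -1) if and only if M₁² = (4/27)(2+M₂)(4-M₂)², which requires M₂ ≥ -2. -/
import Mathlib


/-- For `C₋`: a fixed point `(y₀,y₀)` has differential with trace `-2` (double
eigenvalue `-1`) iff `M₁² = (4/27)(2+M₂)(4-M₂)²`, which requires `M₂ ≥ -2`. -/
theorem cubic_henon_minus_period_doubling_curve (M₁ M₂ : ℝ) :
    ((∃ y₀ : ℝ, -y₀ ^ 3 + (M₂ - 2) * y₀ + M₁ = 0 ∧ M₂ - 3 * y₀ ^ 2 = -2) ↔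
      M₁ ^ 2 = 4 / 27 * (2 + M₂) * (4 - M₂) ^ 2) ∧
    ((∃ y₀ : ℝ, -y₀ ^ 3 + (M₂ - 2) * y₀ + M₁ = 0 ∧ M₂ - 3 * y₀ ^ 2 = -2) →
      -2 ≤ M₂) := by
  constructor
  · constructor
    · rintro ⟨y₀, hy1, hy2⟩
      have h2' : y₀ ^ 2 = (M₂ + 2) / 3 := by linarith
      have hM : M₁ = y₀ ^ 3 - (M₂ - 2) * y₀ := by linarith
      rw [hM]
      linear_combination (y₀ ^ 4 + (14 - 5 * M₂) / 3 * y₀ ^ 2 + (8 - 2 * M₂) ^ 2 / 9) * h2'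
    · intro h
      have hM2 : -2 ≤ M₂ := by
        by_contra hc
        push_neg at hc
        nlinarith [sq_nonneg M₁,
          mul_pos (by linarith : (0:ℝ) < -(2 + M₂)) (by nlinarith : (0:ℝ) < (4 - M₂) ^ 2)]
      set s := Real.sqrt ((M₂ + 2) / 3) with hs_def
      have hs : s ^ 2 = (M₂ + 2) / 3 := Real.sq_sqrt (by linarith)
      have hsq : M₁ ^ 2 = (2 * (4 - M₂) / 3 * s) ^ 2 := by
        rw [h]; linear_combination (4 / 9 * (4 - M₂) ^ 2) * hs.symm
      have hcases : M₁ = 2 * (4 - M₂) / 3 * s ∨ M₁ = -(2 * (4 - M₂) / 3 * s) := by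
        have : (M₁ - 2 * (4 - M₂) / 3 * s) * (M₁ + 2 * (4 - M₂) / 3 * s) = 0 := by
          linear_combination hsq
        rcases mul_eq_zero.mp this with h' | h'
        · left; linarith
        · right; linarith
      rcases hcases with h' | h'
      · exact ⟨s, by linear_combination (-s) * hs + h', by linear_combination (-3) * hs⟩
      · exact ⟨-s, by linear_combination (s) * hs + h', by linear_combination (-3) * hs⟩
  · rintro ⟨y₀, hy1, hy2⟩
    nlinarith [sq_nonneg y₀]
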